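/- If q is a real polynomial of degree d with all coefficients nonzero, then the number of positive real roots of q (counted with multiplicity) does not exceed the number of sign changes in its coefficient sequence, and has the same parity as that number of sign changes. -/

import Mathlib

open Polynomial


lemma aux_pos (s : ℝ[X]) (h : ∀ x : ℝ, s.eval x ≠ 0) (hl : 0 < s.leadingCoeff) :
    0 < s.eval 0 := by
  by_contra hneg
  have h0 : s.eval 0 < 0 := lt_of_le_of_ne (not_lt.1 hneg) (h 0)
  rcases le_or_gt s.degree 0 with hd | hd
  · have hlc : s.leadingCoeff = s.eval 0 := by
      rw [Polynomial.leadingCoeff, Polynomial.natDegree_eq_zero_iff_degree_le_zero.mpr hd,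
        Polynomial.coeff_zero_eq_eval_zero]
    linarith
  · have ht := s.tendsto_atTop_of_leadingCoeff_nonneg hd hl.le
    obtain ⟨x, hx1, hx2⟩ := ((ht.eventually_gt_atTop 0).and (Filter.eventually_ge_atTop 1)).exists
    have hcont : ContinuousOn (fun y => s.eval y) (Set.Icc 0 x) := s.continuousOn
    have : (0:ℝ) ∈ Set.Icc (s.eval 0) (s.eval x) := ⟨h0.le, hx1.le⟩
    obtain ⟨z, _, hz⟩ := intermediate_value_Icc (by linarith : (0:ℝ) ≤ x) hcont this
    exact h z hz

lemma no_root_sign (s : ℝ[X]) (h : ∀ x : ℝ, s.eval x ≠ 0) :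
    0 < s.eval 0 * s.leadingCoeff := by
  have hs0 : s ≠ 0 := by rintro rfl; exact h 0 (by simp)
  rcases lt_or_gt_of_ne (Polynomial.leadingCoeff_ne_zero.mpr hs0) with hl | hl
  · have := aux_pos (-s) (fun x => by simpa using neg_ne_zero.mpr (h x))
      (by simpa using neg_pos.mpr hl)
    simp only [Polynomial.eval_neg] at this
    have h0 : s.eval 0 < 0 := by linarith
    exact mul_pos_of_neg_of_neg h0 hl
  · exact mul_pos (aux_pos s h hl) hl

lemma multiset_prod_neg_iff (m : Multiset ℝ) (h : ∀ x ∈ m, x ≠ 0) :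
    m.prod < 0 ↔ Odd (Multiset.card (m.filter (fun x => x < 0))) := by
  induction m using Multiset.induction with
  | empty => simp
  | cons a s ih =>
    have ha : a ≠ 0 := h a (Multiset.mem_cons_self a s)
    have hs : ∀ x ∈ s, x ≠ 0 := fun x hx => h x (Multiset.mem_cons_of_mem hx)
    have hsprod : s.prod ≠ 0 := Multiset.prod_ne_zero (fun h0 => hs 0 h0 rfl)
    rw [Multiset.prod_cons, Multiset.filter_cons]
    rcases lt_or_gt_of_ne ha with hneg | hpos
    · rw [if_pos hneg, Multiset.card_add, Multiset.card_singleton, add_comm,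
        Nat.odd_add_one, ← ih hs]
      constructor
      · intro hh hh2; nlinarith
      · intro hh
        exact mul_neg_of_neg_of_pos hneg (hsprod.lt_or_gt.resolve_left hh)
    · rw [if_neg (by linarith), zero_add, ← ih hs]
      constructor
      · intro hh; by_contra hh2; nlinarith [hsprod.lt_or_gt.resolve_left hh2]
      · intro hh; exact mul_neg_of_pos_of_neg hpos hh

/-- Positive-roots version of Rolle's counting lemma. -/
lemma pos_rolle (p : ℝ[X]) :
    Multiset.card (p.roots.filter (fun x => 0 < x)) ≤
      Multiset.card ((derivative p).roots.filter (fun x => 0 < x)) + 1 := by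
  rcases eq_or_ne p 0 with rfl | hp
  · simp
  rcases eq_or_ne (derivative p) 0 with hp' | hp'
  · rw [Polynomial.eq_C_of_derivative_eq_zero hp']
    simp
  set M := p.roots.filter (fun x => 0 < x) with hM
  set M' := (derivative p).roots.filter (fun x => 0 < x) with hM'
  have step1 : M.toFinset.card ≤ (M'.toFinset \ M.toFinset).card + 1 := by
    refine Finset.card_le_diff_of_interleaved fun x hx y hy hxy _ => ?_
    rw [Multiset.mem_toFinset, hM, Multiset.mem_filter, mem_roots hp] at hx hy
    obtain ⟨z, hz1, hz2⟩ := exists_deriv_eq_zero hxy p.continuousOn (hx.1.trans hy.1.symm)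
    refine ⟨z, ?_, hz1⟩
    rw [Multiset.mem_toFinset, hM', Multiset.mem_filter, mem_roots hp']
    exact ⟨by rwa [IsRoot, ← p.deriv], hx.2.trans hz1.1⟩
  calc Multiset.card M = ∑ x ∈ M.toFinset, M.count x := (Multiset.toFinset_sum_count_eq _).symm
    _ = ∑ x ∈ M.toFinset, (M.count x - 1 + 1) := Finset.sum_congr rfl fun x hx =>
        (tsub_add_cancel_of_le (Nat.succ_le_iff.2
          (Multiset.count_pos.2 (Multiset.mem_toFinset.1 hx)))).symm
    _ = (∑ x ∈ M.toFinset, (M.count x - 1)) + M.toFinset.card := by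
        simp only [Finset.sum_add_distrib, Finset.card_eq_sum_ones]
    _ ≤ (∑ x ∈ M.toFinset, M'.count x) + ((M'.toFinset \ M.toFinset).card + 1) := by
        refine add_le_add (Finset.sum_le_sum fun x hx => ?_) step1
        rw [Multiset.mem_toFinset, hM, Multiset.mem_filter] at hx
        have h1 : M.count x = p.roots.count x := by
          rw [hM, Multiset.count_filter, if_pos hx.2]
        have h2 : M'.count x = (derivative p).roots.count x := by
          rw [hM', Multiset.count_filter, if_pos hx.2]
        rw [h1, h2, count_roots, count_roots]
        exact rootMultiplicity_sub_one_le_derivative_rootMultiplicity _ _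
    _ ≤ (∑ x ∈ M.toFinset, M'.count x) +
          ((∑ x ∈ M'.toFinset \ M.toFinset, M'.count x) + 1) := by
        refine add_le_add_right (add_le_add_left ((Finset.card_eq_sum_ones _).trans_le ?_) _) _
        refine Finset.sum_le_sum fun x hx => Nat.succ_le_iff.2 ?_
        rw [Multiset.count_pos, ← Multiset.mem_toFinset]
        exact (Finset.mem_sdiff.1 hx).1
    _ = Multiset.card M' + 1 := by
        rw [← add_assoc, ← Finset.sum_union Finset.disjoint_sdiff,
          Finset.union_sdiff_self_eq_union, ← Multiset.toFinset_sum_count_eq,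
          ← Finset.sum_subset Finset.subset_union_right]
        intro x _ hx₂
        simpa only [Multiset.mem_toFinset, Multiset.count_eq_zero] using hx₂

lemma sign_changes_parity (c : ℕ → ℝ) (d : ℕ) (h : ∀ i ≤ d, c i ≠ 0) :
    (c 0 * c d < 0 ↔
      Odd ((Finset.range d).filter (fun i => c i * c (i + 1) < 0)).card) := by
  induction d with
  | zero => simpa using not_lt.2 (mul_self_nonneg (c 0))
  | succ n ih =>
    have hdr := ih (fun i hi => h i (hi.trans (Nat.le_succ n)))
    have h0 := h 0 (Nat.zero_le _)
    have hn := h n (Nat.le_succ n)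
    have hn1 := h (n + 1) le_rfl
    rw [Finset.range_add_one, Finset.filter_insert]
    by_cases hc : c n * c (n + 1) < 0
    · rw [if_pos hc, Finset.card_insert_of_notMem (by simp), Nat.odd_add_one, ← hdr]
      rcases lt_or_gt_of_ne h0 with h0' | h0' <;> rcases lt_or_gt_of_ne hn with hn' | hn' <;>
        rcases lt_or_gt_of_ne hn1 with hn1' | hn1' <;>
        constructor <;> intro hh <;> first
          | nlinarith
          | (intro hh2; nlinarith)
          | (exfalso; revert hh; first | nlinarith | (intro hh; apply hh; nlinarith))
    · rw [if_neg hc, ← hdr]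
      rcases lt_or_gt_of_ne h0 with h0' | h0' <;> rcases lt_or_gt_of_ne hn with hn' | hn' <;>
        rcases lt_or_gt_of_ne hn1 with hn1' | hn1' <;>
        constructor <;> intro hh <;> first
          | nlinarith
          | (exfalso; nlinarith)

lemma pos_roots_parity (q : ℝ[X]) (hq : q ≠ 0) (h0 : q.eval 0 ≠ 0) :
    (q.eval 0 * q.leadingCoeff < 0 ↔
      Odd (Multiset.card (q.roots.filter (fun x => 0 < x)))) := by
  obtain ⟨s, hs⟩ := q.prod_multiset_X_sub_C_dvd
  have hprod_monic : ((q.roots.map fun a => X - C a).prod).Monic :=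
    monic_multiset_prod_of_monic _ _ (fun a _ => monic_X_sub_C a)
  have hs0 : s ≠ 0 := by rintro rfl; rw [mul_zero] at hs; exact hq hs
  have hsroots : s.roots = 0 := by
    have hmul := roots_mul (hs ▸ hq)
    rw [← hs, roots_multiset_prod_X_sub_C] at hmul
    exact (left_eq_add.mp hmul)
  have hnoroot : ∀ x : ℝ, s.eval x ≠ 0 := by
    intro x hx
    have : x ∈ s.roots := (mem_roots hs0).mpr hx
    simp [hsroots] at this
  have hroot0 : ∀ a ∈ q.roots, a ≠ 0 := by
    rintro a ha rfl
    exact h0 ((mem_roots hq).mp ha)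
  have heval : q.eval 0 = ((q.roots.map fun a => -a).prod) * s.eval 0 := by
    conv_lhs => rw [hs]
    rw [eval_mul, eval_multiset_prod, Multiset.map_map]
    congr 2
    apply Multiset.map_congr rfl
    intro a _
    simp
  have hlead : q.leadingCoeff = s.leadingCoeff := by
    rw [hs, leadingCoeff_mul, hprod_monic.leadingCoeff, one_mul]
  have hpos := no_root_sign s hnoroot
  have key : q.eval 0 * q.leadingCoeff < 0 ↔ ((q.roots.map fun a => -a).prod) < 0 := by
    rw [heval, hlead]
    constructor <;> intro hh <;> nlinarith
  rw [key, multiset_prod_neg_iff _ (by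
    intro x hx
    obtain ⟨a, ha, rfl⟩ := Multiset.mem_map.mp hx
    exact neg_ne_zero.mpr (hroot0 a ha)), Multiset.filter_map, Multiset.card_map]
  have hfc : q.roots.filter ((fun x => x < 0) ∘ fun a => -a) =
      q.roots.filter (fun x => 0 < x) := by
    apply Multiset.filter_congr
    intro a _
    simp
  rw [hfc]
lemma descartes_parity (q : ℝ[X]) (d : ℕ) (hdeg : q.natDegree = d)
    (hcoeff : ∀ i ≤ d, q.coeff i ≠ 0) :
    (q.roots.filter (fun x => 0 < x)).card
      ≡ ((Finset.range d).filter (fun i => q.coeff i * q.coeff (i + 1) < 0)).card [MOD 2] := by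
  have h0 : q.eval 0 ≠ 0 := by
    rw [← Polynomial.coeff_zero_eq_eval_zero]; exact hcoeff 0 (Nat.zero_le d)
  have hq : q ≠ 0 := fun h => h0 (by simp [h])
  have hpp := pos_roots_parity q hq h0
  have hvv := sign_changes_parity q.coeff d hcoeff
  have hlead : q.leadingCoeff = q.coeff d := by rw [Polynomial.leadingCoeff, hdeg]
  have hiff : Odd (q.roots.filter (fun x => 0 < x)).card ↔
      Odd ((Finset.range d).filter (fun i => q.coeff i * q.coeff (i + 1) < 0)).card := by
    rw [← hpp, ← hvv, Polynomial.coeff_zero_eq_eval_zero, ← hlead]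
  have h1 := Nat.odd_iff.symm.trans (hiff.trans Nat.odd_iff)
  unfold Nat.ModEq
  omega

lemma descartes_le (q : ℝ[X]) (d : ℕ) (hdeg : q.natDegree = d)
    (hcoeff : ∀ i ≤ d, q.coeff i ≠ 0) :
    (q.roots.filter (fun x => 0 < x)).card ≤
      ((Finset.range d).filter (fun i => q.coeff i * q.coeff (i + 1) < 0)).card := by
  induction d generalizing q with
  | zero =>
    rw [Polynomial.eq_C_of_natDegree_eq_zero hdeg]
    simp
  | succ n ih =>
    have hd' : (derivative q).natDegree = n := by
      refine le_antisymm ?_ (le_natDegree_of_ne_zero ?_)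
      · have := natDegree_derivative_le q
        rw [hdeg] at this
        simpa using this
      · rw [coeff_derivative]
        exact mul_ne_zero (hcoeff (n + 1) le_rfl) (by positivity)
    have hc' : ∀ i ≤ n, (derivative q).coeff i ≠ 0 := by
      intro i hi
      rw [coeff_derivative]
      exact mul_ne_zero (hcoeff (i + 1) (Nat.succ_le_succ hi)) (by positivity)
    have hIH := ih (derivative q) hd' hc'
    have hVle : ((Finset.range n).filter
          (fun i => (derivative q).coeff i * (derivative q).coeff (i + 1) < 0)).card ≤
        ((Finset.range (n + 1)).filter (fun i => q.coeff i * q.coeff (i + 1) < 0)).card := by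
      apply Finset.card_le_card_of_injOn (fun i => i + 1)
      · intro i hi
        simp only [Finset.mem_coe, Finset.mem_filter, Finset.mem_range, coeff_derivative] at hi ⊢
        obtain ⟨hi1, hi2⟩ := hi
        refine ⟨by omega, ?_⟩
        by_contra hcon
        push_neg at hcon
        have e1 : (0:ℝ) < (i : ℝ) + 1 + 1 := by positivity
        have e2 : (0:ℝ) < (i : ℝ) + 1 := by positivity
        push_cast at hi2
        nlinarith [mul_nonneg hcon (mul_pos e2 e1).le]
      · intro a _ b _ h; simpa using h
    have hrolle := pos_rolle q
    have hpar := descartes_parity q (n + 1) hdeg hcoeff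
    unfold Nat.ModEq at hpar
    omega

/-- Descartes' rule of signs with parity, for a real polynomial of degree `d` with all
coefficients nonzero: the number of positive roots (with multiplicity) is at most the
number of sign changes, and has the same parity. -/
theorem descartes_rule_of_signs (q : ℝ[X]) (d : ℕ) (hdeg : q.natDegree = d)
    (hcoeff : ∀ i ≤ d, q.coeff i ≠ 0) :
    (q.roots.filter (fun x => 0 < x)).card
        ≤ ((Finset.range d).filter (fun i => q.coeff i * q.coeff (i + 1) < 0)).card ∧
      (q.roots.filter (fun x => 0 < x)).card
        ≡ ((Finset.range d).filter (fun i => q.coeff i * q.coeff (i + 1) < 0)).card [MOD 2] :=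
  ⟨descartes_le q d hdeg hcoeff, descartes_parity q d hdeg hcoeff⟩
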